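/- arXiv:2109.13379 — 4 statements merged into one kernel-verified Lean document; each statement's English description precedes it below -/
import Mathlib

section
/- Let A₁₁, B₂₁ be n×n Hermitian matrices and A₂₁ an invertible n×n complex matrix. Define K₁₁ = (i/2)[(B₂₁ + iI)(A₂₁*)^{-1}(A₁₁ + iI) + A₂₁], K₁₂ = (i/2)[(B₂₁ + iI)(A₂₁*)^{-1}(A₁₁ - iI) + A₂₁], and K₂₄ = (-i/2)[(A₁₁ - iI)A₂₁^{-1}(B₂₁ - iI) + A₂₁*]. Then K₂₄ = K₁₁* and K₁₂ K₁₂* - K₁₁ K₂₄ = I. -/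
open Matrix

private lemma K_aux {R : Type*} [Ring R] [Algebra ℂ R] (a b c d u y : R)
    (hcd : c * d = 1) (huy : u * y = 1) :
    ((Complex.I / 2) • ((b + Complex.I • 1) * c * (a - Complex.I • 1) + u)) *
      ((-(Complex.I) / 2) • ((a + Complex.I • 1) * y * (b - Complex.I • 1) + d)) -
    ((Complex.I / 2) • ((b + Complex.I • 1) * c * (a + Complex.I • 1) + u)) *
      ((-(Complex.I) / 2) • ((a - Complex.I • 1) * y * (b - Complex.I • 1) + d)) = 1 := by
  have key : ((Complex.I / 2) • ((b + Complex.I • 1) * c * (a - Complex.I • 1) + u)) *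
      ((-(Complex.I) / 2) • ((a + Complex.I • 1) * y * (b - Complex.I • 1) + d)) -
    ((Complex.I / 2) • ((b + Complex.I • 1) * c * (a + Complex.I • 1) + u)) *
      ((-(Complex.I) / 2) • ((a - Complex.I • 1) * y * (b - Complex.I • 1) + d))
      = ((1:ℂ)/4) • ((-(2*Complex.I)) • ((b + Complex.I • 1) * (c * d))
          + (2*Complex.I) • ((u * y) * (b - Complex.I • 1))) := by
    simp only [mul_add, add_mul, mul_sub, sub_mul, smul_add, smul_sub, smul_smul,
      mul_smul_comm, smul_mul_assoc, mul_assoc, mul_one, one_mul]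
    match_scalars <;>
      (first
        | ring1
        | linear_combination (-1/2*Complex.I)*Complex.I_sq
        | linear_combination (1/2*Complex.I)*Complex.I_sq
        | linear_combination (1/2*Complex.I^2)*Complex.I_sq
        | linear_combination (-1/2*Complex.I^2)*Complex.I_sq
        | linear_combination Complex.I_sq
        | linear_combination -Complex.I_sq)
  rw [key, hcd, huy]
  simp only [mul_one, one_mul, smul_add, smul_sub, smul_smul]
  match_scalars <;>
    (first
      | ring1
      | linear_combination (-1/2*Complex.I)*Complex.I_sq
      | linear_combination (1/2*Complex.I)*Complex.I_sq
      | linear_combination (1/2*Complex.I^2)*Complex.I_sq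
      | linear_combination (-1/2*Complex.I^2)*Complex.I_sq
      | linear_combination Complex.I_sq
      | linear_combination -Complex.I_sq)

theorem K_identities (n : ℕ)
    (A₁₁ B₂₁ A₂₁ K₁₁ K₁₂ K₂₄ : Matrix (Fin n) (Fin n) ℂ)
    (hA₁₁ : A₁₁.IsHermitian) (hB₂₁ : B₂₁.IsHermitian) (hA₂₁ : IsUnit A₂₁)
    (hK₁₁ : K₁₁ = (Complex.I / 2) •
      ((B₂₁ + Complex.I • 1) * (A₂₁ᴴ)⁻¹ * (A₁₁ + Complex.I • 1) + A₂₁))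
    (hK₁₂ : K₁₂ = (Complex.I / 2) •
      ((B₂₁ + Complex.I • 1) * (A₂₁ᴴ)⁻¹ * (A₁₁ - Complex.I • 1) + A₂₁))
    (hK₂₄ : K₂₄ = (-(Complex.I) / 2) •
      ((A₁₁ - Complex.I • 1) * A₂₁⁻¹ * (B₂₁ - Complex.I • 1) + A₂₁ᴴ)) :
    K₂₄ = K₁₁ᴴ ∧ K₁₂ * K₁₂ᴴ - K₁₁ * K₂₄ = 1 := by
  have hdet : IsUnit A₂₁.det := (isUnit_iff_isUnit_det _).mp hA₂₁
  have hdetH : IsUnit (A₂₁ᴴ).det := by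
    rw [det_conjTranspose]; exact hdet.star
  have hcd : (A₂₁ᴴ)⁻¹ * A₂₁ᴴ = 1 := nonsing_inv_mul _ hdetH
  have huy : A₂₁ * A₂₁⁻¹ = 1 := mul_nonsing_inv _ hdet
  have h1 : K₁₁ᴴ = (-(Complex.I) / 2) •
      ((A₁₁ - Complex.I • 1) * A₂₁⁻¹ * (B₂₁ - Complex.I • 1) + A₂₁ᴴ) := by
    rw [hK₁₁]
    simp only [conjTranspose_smul, conjTranspose_add, conjTranspose_sub,
      conjTranspose_mul, conjTranspose_smul, conjTranspose_one,
      conjTranspose_nonsing_inv, conjTranspose_conjTranspose, hA₁₁.eq, hB₂₁.eq]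
    rw [show star (Complex.I / 2) = -(Complex.I) / 2 by
      simp [Complex.star_def, map_div₀, Complex.conj_I]]
    congr 1
    rw [show star Complex.I = -Complex.I from Complex.conj_I]
    simp only [sub_eq_add_neg, neg_smul, neg_neg, mul_assoc]
  have hK12H : K₁₂ᴴ = (-(Complex.I) / 2) •
      ((A₁₁ + Complex.I • 1) * A₂₁⁻¹ * (B₂₁ - Complex.I • 1) + A₂₁ᴴ) := by
    rw [hK₁₂]
    simp only [conjTranspose_smul, conjTranspose_add, conjTranspose_sub,
      conjTranspose_mul, conjTranspose_smul, conjTranspose_one,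
      conjTranspose_nonsing_inv, conjTranspose_conjTranspose, hA₁₁.eq, hB₂₁.eq]
    rw [show star (Complex.I / 2) = -(Complex.I) / 2 by
      simp [Complex.star_def, map_div₀, Complex.conj_I]]
    congr 1
    rw [show star Complex.I = -Complex.I from Complex.conj_I]
    simp only [sub_eq_add_neg, neg_smul, neg_neg, mul_assoc]
  refine ⟨by rw [hK₂₄, h1], ?_⟩
  rw [hK12H, hK₁₂, hK₁₁, hK₂₄]
  exact K_aux A₁₁ B₂₁ ((A₂₁ᴴ)⁻¹) (A₂₁ᴴ) A₂₁ (A₂₁⁻¹) hcd huy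
end

section
/- Let A₁₁, B₂₁ be n×n Hermitian matrices and A₂₁ an invertible n×n complex matrix. Then the 2n×2n block matrix [[I, A₂₁*(B₂₁ + iI)^{-1}], [-A₂₁(A₁₁ - iI)^{-1}, I]] is invertible. -/
open Matrix

private lemma isUnit_of_mulVec_injective {m : ℕ} {M : Matrix (Fin m) (Fin m) ℂ}
    (h : ∀ v, M.mulVec v = 0 → v = 0) : IsUnit M := by
  rw [Matrix.isUnit_iff_isUnit_det, isUnit_iff_ne_zero]
  intro hdet
  obtain ⟨v, hv, hMv⟩ := Matrix.exists_mulVec_eq_zero_iff.mpr hdet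
  exact hv (h v hMv)

private lemma star_mulVec_dot {m : ℕ} (M : Matrix (Fin m) (Fin m) ℂ) (z w : Fin m → ℂ) :
    star (M *ᵥ z) ⬝ᵥ w = star z ⬝ᵥ Mᴴ *ᵥ w := by
  rw [star_mulVec, dotProduct_mulVec]

private lemma herm_dot_im {m : ℕ} {H : Matrix (Fin m) (Fin m) ℂ} (hH : H.IsHermitian)
    (x : Fin m → ℂ) : (star x ⬝ᵥ H.mulVec x).im = 0 := by
  rw [← Complex.conj_eq_iff_im]
  show star (star x ⬝ᵥ H *ᵥ x) = star x ⬝ᵥ H *ᵥ x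
  rw [← star_dotProduct, star_mulVec_dot, hH.eq]

private lemma dot_star_self {m : ℕ} (x : Fin m → ℂ) :
    star x ⬝ᵥ x = ((∑ i, Complex.normSq (x i) : ℝ) : ℂ) := by
  simp [dotProduct, Complex.normSq_eq_conj_mul_self]

private lemma herm_add_smul_isUnit {m : ℕ} {H : Matrix (Fin m) (Fin m) ℂ} (hH : H.IsHermitian)
    {c : ℂ} (hc : c.im ≠ 0) : IsUnit (H + c • 1) := by
  apply isUnit_of_mulVec_injective
  intro v hv
  have h0 : star v ⬝ᵥ ((H + c • (1 : Matrix (Fin m) (Fin m) ℂ)).mulVec v) = 0 := by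
    rw [hv, dotProduct_zero]
  rw [add_mulVec, smul_mulVec, one_mulVec, dotProduct_add, dotProduct_smul,
    smul_eq_mul] at h0
  have him := congrArg Complex.im h0
  rw [Complex.add_im, herm_dot_im hH, dot_star_self, zero_add, Complex.mul_im] at him
  simp only [Complex.ofReal_im, Complex.ofReal_re, mul_zero, add_zero, zero_add,
    Complex.zero_im] at him
  have hsum : (∑ i, Complex.normSq (v i) : ℝ) = 0 := by
    rcases mul_eq_zero.mp him with h | h
    · exact absurd h hc
    · exact h
  have hall := (Finset.sum_eq_zero_iff_of_nonneg
    (fun i _ => Complex.normSq_nonneg (v i))).mp hsum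
  funext i
  exact Complex.normSq_eq_zero.mp (hall i (Finset.mem_univ i))

theorem block_matrix_invertible (n : ℕ)
    (A₁₁ B₂₁ A₂₁ : Matrix (Fin n) (Fin n) ℂ)
    (hA₁₁ : A₁₁.IsHermitian) (hB₂₁ : B₂₁.IsHermitian) (hA₂₁ : IsUnit A₂₁) :
    IsUnit (Matrix.fromBlocks 1 (A₂₁ᴴ * (B₂₁ + Complex.I • 1)⁻¹)
      (-(A₂₁ * (A₁₁ - Complex.I • 1)⁻¹)) 1) := by
  set P : Matrix (Fin n) (Fin n) ℂ := A₁₁ - Complex.I • 1 with hP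
  set Q : Matrix (Fin n) (Fin n) ℂ := B₂₁ + Complex.I • 1 with hQ
  have hPu : IsUnit P := by
    have h1 := herm_add_smul_isUnit hA₁₁ (c := -Complex.I) (by simp)
    rw [hP, sub_eq_add_neg, ← neg_smul]
    exact h1
  have hQu : IsUnit Q := herm_add_smul_isUnit hB₂₁ (c := Complex.I) (by simp)
  have hPdet : IsUnit P.det := (Matrix.isUnit_iff_isUnit_det P).mp hPu
  have hQdet : IsUnit Q.det := (Matrix.isUnit_iff_isUnit_det Q).mp hQu
  set S : Matrix (Fin n) (Fin n) ℂ := P + A₂₁ᴴ * Q⁻¹ * A₂₁ with hS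
  have hSu : IsUnit S := by
    apply isUnit_of_mulVec_injective
    intro v hv
    have hQz : Q *ᵥ (Q⁻¹ *ᵥ (A₂₁ *ᵥ v)) = A₂₁ *ᵥ v := by
      rw [mulVec_mulVec, Matrix.mul_nonsing_inv Q hQdet, one_mulVec]
    set z : Fin n → ℂ := Q⁻¹ *ᵥ (A₂₁ *ᵥ v) with hz
    have h0 : star v ⬝ᵥ S *ᵥ v = 0 := by rw [hv, dotProduct_zero]
    have hexp : star v ⬝ᵥ S *ᵥ v
        = star v ⬝ᵥ A₁₁ *ᵥ v - Complex.I * (star v ⬝ᵥ v)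
          + (star z ⬝ᵥ B₂₁ *ᵥ z - Complex.I * (star z ⬝ᵥ z)) := by
      have h3 : star v ⬝ᵥ (A₂₁ᴴ * Q⁻¹ * A₂₁) *ᵥ v
          = star z ⬝ᵥ B₂₁ *ᵥ z - Complex.I * (star z ⬝ᵥ z) := by
        have e1 : (A₂₁ᴴ * Q⁻¹ * A₂₁) *ᵥ v = A₂₁ᴴ *ᵥ z := by
          rw [hz, mulVec_mulVec, mulVec_mulVec, Matrix.mul_assoc]
        have e2 : star v ⬝ᵥ A₂₁ᴴ *ᵥ z = star (A₂₁ *ᵥ v) ⬝ᵥ z := by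
          rw [star_mulVec_dot]
        have e4 : Qᴴ = B₂₁ - Complex.I • 1 := by
          rw [hQ, conjTranspose_add, hB₂₁.eq, conjTranspose_smul, conjTranspose_one]
          simp [sub_eq_add_neg, Complex.star_def, Complex.conj_I]
        rw [e1, e2, ← hQz, star_mulVec_dot, e4, sub_mulVec, dotProduct_sub,
          smul_mulVec, one_mulVec, dotProduct_smul, smul_eq_mul]
      rw [hS, add_mulVec, dotProduct_add, h3, hP, sub_mulVec, dotProduct_sub,
        smul_mulVec, one_mulVec, dotProduct_smul, smul_eq_mul]
    rw [hexp] at h0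
    have him := congrArg Complex.im h0
    rw [Complex.add_im, Complex.sub_im, Complex.sub_im, herm_dot_im hA₁₁, herm_dot_im hB₂₁,
      dot_star_self v, dot_star_self z, Complex.mul_im, Complex.mul_im] at him
    simp only [Complex.I_re, Complex.I_im, Complex.ofReal_re, Complex.ofReal_im, zero_mul,
      one_mul, mul_zero, add_zero, zero_add, zero_sub, Complex.zero_im] at him
    have h1 : (0:ℝ) ≤ ∑ i, Complex.normSq (v i) :=
      Finset.sum_nonneg fun i _ => Complex.normSq_nonneg _
    have h2 : (0:ℝ) ≤ ∑ i, Complex.normSq (z i) :=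
      Finset.sum_nonneg fun i _ => Complex.normSq_nonneg _
    have hvsum : (∑ i, Complex.normSq (v i) : ℝ) = 0 := by linarith
    have hall := (Finset.sum_eq_zero_iff_of_nonneg
      (fun i _ => Complex.normSq_nonneg (v i))).mp hvsum
    funext i
    exact Complex.normSq_eq_zero.mp (hall i (Finset.mem_univ i))
  have hKey : (1 : Matrix (Fin n) (Fin n) ℂ)
      - A₂₁ᴴ * Q⁻¹ * 1 * (-(A₂₁ * P⁻¹)) = S * P⁻¹ := by
    rw [hS, Matrix.add_mul, Matrix.mul_nonsing_inv P hPdet, Matrix.mul_one,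
      Matrix.mul_neg, sub_neg_eq_add]
    simp [Matrix.mul_assoc]
  have hKu : IsUnit ((1 : Matrix (Fin n) (Fin n) ℂ)
      - A₂₁ᴴ * Q⁻¹ * 1 * (-(A₂₁ * P⁻¹))) := by
    rw [hKey]
    exact hSu.mul ((Matrix.isUnit_nonsing_inv_iff).mpr hPu)
  letI : Invertible (1 : Matrix (Fin n) (Fin n) ℂ) := invertibleOne
  obtain ⟨iK⟩ := hKu.nonempty_invertible
  letI : Invertible ((1 : Matrix (Fin n) (Fin n) ℂ)
      - A₂₁ᴴ * Q⁻¹ * 1 * (-(A₂₁ * P⁻¹))) := iK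
  letI : Invertible ((1 : Matrix (Fin n) (Fin n) ℂ)
      - A₂₁ᴴ * Q⁻¹ * ⅟(1 : Matrix (Fin n) (Fin n) ℂ) * (-(A₂₁ * P⁻¹))) := by
    rwa [invOf_one]
  letI := Matrix.fromBlocks₂₂Invertible 1 (A₂₁ᴴ * Q⁻¹) (-(A₂₁ * P⁻¹)) 1
  exact isUnit_of_invertible _
end

section
/- Suppose K₁₁ is an n×n complex matrix and K₁₂ satisfies K₁₂ K₁₂* = I + K₁₁ K₁₁*. Then K₁₂ K₁₂* is positive definite and in the singular value decomposition K₁₁ = V₂* S^{-1} C V₁ (with S, C positive semi-definite diagonal, S² + C² = I), necessarily rank S = n, i.e. S is invertible with S ≤ I. -/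
open Matrix
open scoped ComplexOrder

theorem coupled_rank_S_full (n : ℕ)
    (K₁₁ K₁₂ : Matrix (Fin n) (Fin n) ℂ)
    (hK : K₁₂ * K₁₂ᴴ = 1 + K₁₁ * K₁₁ᴴ)
    (V₁ V₂ S C : Matrix (Fin n) (Fin n) ℂ)
    (hV₁ : V₁ ∈ Matrix.unitaryGroup (Fin n) ℂ)
    (hV₂ : V₂ ∈ Matrix.unitaryGroup (Fin n) ℂ)
    (hS : S.PosSemidef) (hSd : S.IsDiag)
    (hC : C.PosSemidef) (hCd : C.IsDiag)
    (hSC : S ^ 2 + C ^ 2 = 1)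
    -- the singular value decomposition `K₁₁ = V₂ᴴ S⁻¹ C V₁`, written
    -- in the equivalent inverse-free form `S V₂ K₁₁ = C V₁`
    (hsvd : S * V₂ * K₁₁ = C * V₁) :
    (K₁₂ * K₁₂ᴴ).PosDef ∧ IsUnit S ∧ S.rank = n ∧ (1 - S).PosSemidef := by
  have hPD : (K₁₂ * K₁₂ᴴ).PosDef := by
    rw [hK]
    exact Matrix.PosDef.add_posSemidef Matrix.PosDef.one
      (Matrix.posSemidef_self_mul_conjTranspose K₁₁)
  obtain ⟨d, rfl⟩ : ∃ d, S = Matrix.diagonal d := ⟨S.diag, hSd.diagonal_diag.symm⟩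
  obtain ⟨e, rfl⟩ : ∃ e, C = Matrix.diagonal e := ⟨C.diag, hCd.diagonal_diag.symm⟩
  have hdnn : ∀ i, 0 ≤ d i := Matrix.posSemidef_diagonal_iff.mp hS
  have henn : ∀ i, 0 ≤ e i := Matrix.posSemidef_diagonal_iff.mp hC
  -- pointwise equation d i ^ 2 + e i ^ 2 = 1
  have hpt : ∀ i, d i ^ 2 + e i ^ 2 = 1 := by
    intro i
    have h := congrFun (congrFun hSC i) i
    simpa [pow_two, Matrix.diagonal_mul_diagonal, Matrix.add_apply,
      Matrix.diagonal_apply_eq, Matrix.one_apply_eq] using h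
  -- every diagonal entry is nonzero
  have hdne : ∀ i, d i ≠ 0 := by
    intro i h0
    have he1 : e i ≠ 0 := by
      intro hc
      have := hpt i
      rw [h0, hc] at this
      norm_num at this
    have hrow : ∀ j, V₁ i j = 0 := by
      intro j
      have h := congrFun (congrFun hsvd i) j
      rw [Matrix.mul_assoc] at h
      simp only [Matrix.diagonal_mul] at h
      rw [h0, zero_mul] at h
      exact (mul_eq_zero.mp h.symm).resolve_left he1
    have hdet0 : V₁.det = 0 := Matrix.det_eq_zero_of_row_eq_zero i hrow
    have hunit : IsUnit V₁ := (Unitary.toUnits ⟨V₁, hV₁⟩).isUnit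
    exact ((Matrix.isUnit_iff_isUnit_det V₁).mp hunit).ne_zero hdet0
  have hUnit : IsUnit (Matrix.diagonal d) := by
    rw [Matrix.isUnit_iff_isUnit_det, Matrix.det_diagonal, isUnit_iff_ne_zero]
    exact Finset.prod_ne_zero_iff.mpr fun i _ => hdne i
  refine ⟨hPD, hUnit, ?_, ?_⟩
  · rw [Matrix.rank_of_isUnit _ hUnit, Fintype.card_fin]
  · rw [← Matrix.diagonal_one, Matrix.diagonal_sub]
    refine Matrix.posSemidef_diagonal_iff.mpr fun i => ?_
    obtain ⟨r, hr0, hr⟩ : ∃ r : ℝ, 0 ≤ r ∧ d i = (r : ℂ) := by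
      have h := hdnn i
      rw [Complex.le_def] at h
      exact ⟨(d i).re, h.1, Complex.ext rfl (by simpa using h.2.symm)⟩
    obtain ⟨c, hc0, hc⟩ : ∃ c : ℝ, 0 ≤ c ∧ e i = (c : ℂ) := by
      have h := henn i
      rw [Complex.le_def] at h
      exact ⟨(e i).re, h.1, Complex.ext rfl (by simpa using h.2.symm)⟩
    have hreal : r ^ 2 + c ^ 2 = 1 := by
      have := hpt i
      rw [hr, hc] at this
      exact_mod_cast this
    have hr1 : r ≤ 1 := by nlinarith
    rw [hr]
    have h1 : ((1 - r : ℝ) : ℂ) = 1 - (r : ℂ) := by push_cast; ring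
    rw [← h1]
    exact Complex.zero_le_real.mpr (by linarith)
end

section
/- Let W be a 2n×2n unitary matrix. Then there exist n×n unitary matrices U₁, U₂, V₁, V₂ and positive semi-definite diagonal n×n matrices C, S with C² + S² = I such that W = [[U₁, 0],[0, U₂]] · [[C, S],[-S, C]] · [[V₁, 0],[0, V₂]]. -/
open Matrix
open scoped ComplexOrder

lemma polar_diag {n : ℕ} (M : Matrix (Fin n) (Fin n) ℂ) (d : Fin n → ℝ)
    (h : Mᴴ * M = Matrix.diagonal (fun i => (d i : ℂ)) * Matrix.diagonal (fun i => (d i : ℂ))) :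
    ∃ U ∈ Matrix.unitaryGroup (Fin n) ℂ, M = U * Matrix.diagonal (fun i => (d i : ℂ)) := by
  classical
  have hentry : ∀ i j, ∑ k, (starRingEnd ℂ) (M k i) * M k j
      = if i = j then ((d i : ℂ) * (d j : ℂ)) else 0 := by
    intro i j
    have := congrFun (congrFun h i) j
    simpa [Matrix.mul_apply, Matrix.conjTranspose_apply, Matrix.diagonal_mul_diagonal,
      Matrix.diagonal_apply, eq_comm] using this.symm
  have hcol0 : ∀ i, d i = 0 → ∀ k, M k i = 0 := by
    intro i hdi k
    have h0 : ∑ k, (starRingEnd ℂ) (M k i) * M k i = 0 := by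
      rw [hentry i i]; simp [hdi]
    have h1 : ∑ k, (Complex.normSq (M k i) : ℂ) = 0 := by
      rw [← h0]
      refine Finset.sum_congr rfl fun k _ => ?_
      rw [Complex.normSq_eq_conj_mul_self]
    have h2 : ∑ k, Complex.normSq (M k i) = 0 := by exact_mod_cast h1
    have := (Finset.sum_eq_zero_iff_of_nonneg (fun k _ => Complex.normSq_nonneg _)).mp h2
    exact Complex.normSq_eq_zero.mp (this k (Finset.mem_univ k))
  set v : Fin n → EuclideanSpace ℂ (Fin n) := fun i => WithLp.toLp 2 (fun k => (d i : ℂ)⁻¹ * M k i) with hv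
  have hinner : ∀ i j, inner ℂ (v i) (v j)
      = (d i : ℂ)⁻¹ * (d j : ℂ)⁻¹ * (if i = j then ((d i : ℂ) * (d j : ℂ)) else 0) := by
    intro i j
    rw [PiLp.inner_apply]
    rw [← hentry i j, Finset.mul_sum]
    refine Finset.sum_congr rfl fun k _ => ?_
    simp only [hv, PiLp.toLp_apply, RCLike.inner_apply, _root_.map_mul, map_inv₀, Complex.conj_ofReal]
    ring
  have hon : Orthonormal ℂ (Set.restrict {i | d i ≠ 0} v) := by
    rw [orthonormal_iff_ite]
    intro i j
    show inner ℂ (v i) (v j) = _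
    rw [hinner]
    by_cases hij : i = j
    · subst hij
      have hdi : (d (i : Fin n) : ℂ) ≠ 0 := by exact_mod_cast i.2
      simp only [if_pos rfl, if_pos (rfl : (i:Fin n) = i)]
      field_simp
      simp
    · have : (i : Fin n) ≠ (j : Fin n) := fun hc => hij (Subtype.ext hc)
      simp [this, hij]
  obtain ⟨b, hb⟩ := hon.exists_orthonormalBasis_extension_of_card_eq (by simp)
  set U : Matrix (Fin n) (Fin n) ℂ := Matrix.of (fun k i => b i k) with hU
  have hUmem : U ∈ Matrix.unitaryGroup (Fin n) ℂ := by
    rw [Matrix.mem_unitaryGroup_iff']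
    ext i j
    have := orthonormal_iff_ite.mp b.orthonormal i j
    rw [PiLp.inner_apply] at this
    simp only [RCLike.inner_apply] at this
    simp only [Matrix.star_eq_conjTranspose, Matrix.mul_apply, Matrix.conjTranspose_apply,
      hU, Matrix.of_apply, RCLike.star_def, Matrix.one_apply]
    rw [← this]; exact Finset.sum_congr rfl fun _ _ => mul_comm _ _
  refine ⟨U, hUmem, ?_⟩
  ext k i
  rw [Matrix.mul_diagonal]
  by_cases hdi : d i = 0
  · simp [hcol0 i hdi k, hdi]
  · have hbi : b i = v i := hb i hdi
    have hUki : U k i = (d i : ℂ)⁻¹ * M k i := by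
      rw [hU]
      show b i k = _
      rw [hbi]
    rw [hUki]
    have hd' : (d i : ℂ) ≠ 0 := by exact_mod_cast hdi
    field_simp

lemma polar_psd {n : ℕ} (M P : Matrix (Fin n) (Fin n) ℂ) (hP : P.PosSemidef)
    (h : Mᴴ * M = P * P) : ∃ U ∈ Matrix.unitaryGroup (Fin n) ℂ, M = U * P := by
  have hH : P.IsHermitian := hP.1
  set V : Matrix (Fin n) (Fin n) ℂ := (hH.eigenvectorUnitary : Matrix (Fin n) (Fin n) ℂ) with hVdef
  have hVmem : V ∈ Matrix.unitaryGroup (Fin n) ℂ := (hH.eigenvectorUnitary).2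
  have hV1 : Vᴴ * V = 1 := by
    rw [← Matrix.star_eq_conjTranspose]; exact Matrix.mem_unitaryGroup_iff'.mp hVmem
  have hV2 : V * Vᴴ = 1 := by
    rw [← Matrix.star_eq_conjTranspose]; exact Matrix.mem_unitaryGroup_iff.mp hVmem
  set Dg : Matrix (Fin n) (Fin n) ℂ := Matrix.diagonal (fun i => (hH.eigenvalues i : ℂ)) with hDg
  have hspec : P = V * Dg * Vᴴ := by
    have := hH.spectral_theorem
    rw [Unitary.conjStarAlgAut_apply] at this
    rw [← Matrix.star_eq_conjTranspose]
    exact this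
  have key : (M * V)ᴴ * (M * V) = Dg * Dg := by
    rw [Matrix.conjTranspose_mul]
    calc Vᴴ * Mᴴ * (M * V) = Vᴴ * (Mᴴ * M) * V := by
          rw [Matrix.mul_assoc, Matrix.mul_assoc, Matrix.mul_assoc]
      _ = Vᴴ * (V * Dg * Vᴴ * (V * Dg * Vᴴ)) * V := by rw [h, hspec]
      _ = Dg * Dg := by
          rw [show V * Dg * Vᴴ * (V * Dg * Vᴴ) = V * (Dg * (Vᴴ * V) * Dg) * Vᴴ by
            simp only [Matrix.mul_assoc]]
          rw [hV1, Matrix.mul_one]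
          rw [show Vᴴ * (V * (Dg * Dg) * Vᴴ) * V = (Vᴴ * V) * (Dg * Dg) * (Vᴴ * V) by
            simp only [Matrix.mul_assoc]]
          rw [hV1, Matrix.one_mul, Matrix.mul_one]
  obtain ⟨U', hU'mem, hU'⟩ := polar_diag (M * V) hH.eigenvalues key
  refine ⟨U' * Vᴴ, ?_, ?_⟩
  · exact mul_mem hU'mem (by rw [← Matrix.star_eq_conjTranspose]; exact Unitary.star_mem hVmem)
  · calc M = M * V * Vᴴ := by rw [Matrix.mul_assoc, hV2, Matrix.mul_one]
      _ = U' * Dg * Vᴴ := by rw [hU']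
      _ = U' * Vᴴ * P := by
          rw [hspec]
          simp only [Matrix.mul_assoc]
          rw [show Vᴴ * (V * (Dg * Vᴴ)) = (Vᴴ * V) * (Dg * Vᴴ) from (Matrix.mul_assoc _ _ _).symm,
            hV1, Matrix.one_mul]

lemma diag_comm {n : ℕ} (a b : Fin n → ℂ) :
    Matrix.diagonal a * Matrix.diagonal b = Matrix.diagonal b * Matrix.diagonal a := by
  rw [Matrix.diagonal_mul_diagonal, Matrix.diagonal_mul_diagonal]
  exact congrArg Matrix.diagonal (funext fun i => mul_comm _ _)

lemma diag_eq {n : ℕ} (a b c : Fin n → ℂ) (h : ∀ i, a i * b i = c i) :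
    Matrix.diagonal a * Matrix.diagonal b = Matrix.diagonal c := by
  rw [Matrix.diagonal_mul_diagonal]
  exact congrArg Matrix.diagonal (funext h)

theorem cs_decomposition (n : ℕ)
    (W : Matrix (Fin n ⊕ Fin n) (Fin n ⊕ Fin n) ℂ)
    (hW : W ∈ Matrix.unitaryGroup (Fin n ⊕ Fin n) ℂ) :
    ∃ U₁ U₂ V₁ V₂ C S : Matrix (Fin n) (Fin n) ℂ,
      U₁ ∈ Matrix.unitaryGroup (Fin n) ℂ ∧ U₂ ∈ Matrix.unitaryGroup (Fin n) ℂ ∧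
      V₁ ∈ Matrix.unitaryGroup (Fin n) ℂ ∧ V₂ ∈ Matrix.unitaryGroup (Fin n) ℂ ∧
      C.PosSemidef ∧ C.IsDiag ∧ S.PosSemidef ∧ S.IsDiag ∧
      C ^ 2 + S ^ 2 = 1 ∧
      W = Matrix.fromBlocks U₁ 0 0 U₂ * Matrix.fromBlocks C S (-S) C *
            Matrix.fromBlocks V₁ 0 0 V₂ := by
  classical
  have h1 : Wᴴ * W = 1 := by
    rw [← Matrix.star_eq_conjTranspose]; exact Matrix.mem_unitaryGroup_iff'.mp hW
  have h2 : W * Wᴴ = 1 := by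
    rw [← Matrix.star_eq_conjTranspose]; exact Matrix.mem_unitaryGroup_iff.mp hW
  set A := W.toBlocks₁₁ with hA
  set B := W.toBlocks₁₂ with hB
  set Cm := W.toBlocks₂₁ with hCm
  set Dm := W.toBlocks₂₂ with hDm
  have hWb : W = fromBlocks A B Cm Dm := (fromBlocks_toBlocks W).symm
  rw [hWb, Matrix.fromBlocks_conjTranspose, Matrix.fromBlocks_multiply,
    ← Matrix.fromBlocks_one, Matrix.fromBlocks_inj] at h1 h2
  obtain ⟨e11, e12, -, -⟩ := h1
  obtain ⟨f11, f12, -, f22⟩ := h2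
  -- spectral theorem for G = Aᴴ * A
  have hG : (Aᴴ * A).PosSemidef := Matrix.posSemidef_conjTranspose_mul_self A
  have hGh : (Aᴴ * A).IsHermitian := hG.1
  set lam : Fin n → ℝ := hGh.eigenvalues with hlam
  set V : Matrix (Fin n) (Fin n) ℂ := (hGh.eigenvectorUnitary : Matrix (Fin n) (Fin n) ℂ)
    with hVdef
  have hVmem : V ∈ Matrix.unitaryGroup (Fin n) ℂ := (hGh.eigenvectorUnitary).2
  have hV1 : Vᴴ * V = 1 := by
    rw [← Matrix.star_eq_conjTranspose]; exact Matrix.mem_unitaryGroup_iff'.mp hVmem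
  have hV2 : V * Vᴴ = 1 := by
    rw [← Matrix.star_eq_conjTranspose]; exact Matrix.mem_unitaryGroup_iff.mp hVmem
  have hVc1 : ∀ X : Matrix (Fin n) (Fin n) ℂ, Vᴴ * (V * X) = X := fun X => by
    rw [← Matrix.mul_assoc, hV1, Matrix.one_mul]
  have hVc2 : ∀ X : Matrix (Fin n) (Fin n) ℂ, V * (Vᴴ * X) = X := fun X => by
    rw [← Matrix.mul_assoc, hV2, Matrix.one_mul]
  set Dg : Matrix (Fin n) (Fin n) ℂ := Matrix.diagonal (fun i => (lam i : ℂ)) with hDg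
  have hspec : Aᴴ * A = V * Dg * Vᴴ := by
    have := hGh.spectral_theorem
    rw [Unitary.conjStarAlgAut_apply] at this
    rw [← Matrix.star_eq_conjTranspose]
    exact this
  have hVGV : Vᴴ * (Aᴴ * A) * V = Dg := by
    rw [hspec]
    calc Vᴴ * (V * Dg * Vᴴ) * V = (Vᴴ * V) * Dg * (Vᴴ * V) := by
          simp only [Matrix.mul_assoc]
      _ = Dg := by rw [hV1, Matrix.one_mul, Matrix.mul_one]
  -- eigenvalue bounds
  have hlam0 : ∀ i, 0 ≤ lam i := fun i => hG.eigenvalues_nonneg i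
  have hlam1 : ∀ i, lam i ≤ 1 := by
    have hps : (Vᴴ * (Cmᴴ * Cm) * V).PosSemidef :=
      (Matrix.posSemidef_conjTranspose_mul_self Cm).conjTranspose_mul_mul_same V
    have hCC : Cmᴴ * Cm = 1 - Aᴴ * A := by rw [← e11]; abel
    have hdiag : Vᴴ * (Cmᴴ * Cm) * V = Matrix.diagonal (fun i => ((1 - lam i : ℝ) : ℂ)) := by
      rw [hCC, Matrix.mul_sub, Matrix.mul_one, Matrix.sub_mul, hVGV, hV1]
      ext i j
      by_cases hij : i = j <;>
        simp [Matrix.diagonal_apply, hij, Matrix.one_apply, Complex.ofReal_sub, hDg,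
          Matrix.sub_apply]
    rw [hdiag] at hps
    intro i
    have := (Matrix.posSemidef_diagonal_iff.mp hps) i
    rw [Complex.zero_le_real] at this
    linarith
  -- define c, s
  set c : Fin n → ℝ := fun i => Real.sqrt (lam i) with hc
  set s : Fin n → ℝ := fun i => Real.sqrt (1 - lam i) with hs
  have hc0 : ∀ i, 0 ≤ c i := fun i => Real.sqrt_nonneg _
  have hs0 : ∀ i, 0 ≤ s i := fun i => Real.sqrt_nonneg _
  have hc2 : ∀ i, c i * c i = lam i := fun i => Real.mul_self_sqrt (hlam0 i)
  have hs2 : ∀ i, s i * s i = 1 - lam i := fun i => Real.mul_self_sqrt (by linarith [hlam1 i])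
  have hse1 : ∀ i, s i = 0 → c i = 1 := by
    intro i hsi
    have h0 : 1 - lam i = 0 := by
      have := hs2 i; rw [hsi] at this; linarith
    have hl : lam i = 1 := by linarith
    show Real.sqrt (lam i) = 1
    rw [hl, Real.sqrt_one]
  set C : Matrix (Fin n) (Fin n) ℂ := Matrix.diagonal (fun i => (c i : ℂ)) with hCdef
  set S : Matrix (Fin n) (Fin n) ℂ := Matrix.diagonal (fun i => (s i : ℂ)) with hSdef
  have hCpsd : C.PosSemidef := Matrix.posSemidef_diagonal_iff.mpr
    (fun i => Complex.zero_le_real.mpr (hc0 i))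
  have hSpsd : S.PosSemidef := Matrix.posSemidef_diagonal_iff.mpr
    (fun i => Complex.zero_le_real.mpr (hs0 i))
  have hCh : Cᴴ = C := hCpsd.1
  have hSh : Sᴴ = S := hSpsd.1
  have hCCd : C * C = Dg := by
    rw [hCdef, hDg]
    exact diag_eq _ _ _ (fun i => by
      show (c i : ℂ) * (c i : ℂ) = ((lam i : ℝ) : ℂ)
      exact_mod_cast congrArg Complex.ofReal (hc2 i))
  have hCS1 : C * C + S * S = 1 := by
    rw [hCdef, hSdef,
      diag_eq _ _ (fun i => ((lam i : ℂ)))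
        (fun i => by
          show (c i : ℂ) * (c i : ℂ) = ((lam i : ℝ) : ℂ)
          exact_mod_cast congrArg Complex.ofReal (hc2 i)),
      diag_eq _ _ (fun i => (((1 - lam i : ℝ)) : ℂ))
        (fun i => by
          show (s i : ℂ) * (s i : ℂ) = ((1 - lam i : ℝ) : ℂ)
          exact_mod_cast congrArg Complex.ofReal (hs2 i)),
      Matrix.diagonal_add, ← Matrix.diagonal_one]
    exact congrArg Matrix.diagonal (funext fun i => by push_cast; ring)
  have hSS : S * S = 1 - C * C := by rw [← hCS1]; abel
  have hCS : C * S = S * C := diag_comm _ _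
  -- step 1 : polar of A * V : A = U₁ C Vᴴ
  obtain ⟨U₁, hU₁mem, hU₁⟩ := polar_psd (A * V) C hCpsd (by
    rw [Matrix.conjTranspose_mul, Matrix.mul_assoc, ← Matrix.mul_assoc Aᴴ A V,
      ← Matrix.mul_assoc Vᴴ (Aᴴ * A) V, hVGV, hCCd])
  have hU₁1 : U₁ᴴ * U₁ = 1 := by
    rw [← Matrix.star_eq_conjTranspose]; exact Matrix.mem_unitaryGroup_iff'.mp hU₁mem
  have hU₁2 : U₁ * U₁ᴴ = 1 := by
    rw [← Matrix.star_eq_conjTranspose]; exact Matrix.mem_unitaryGroup_iff.mp hU₁mem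
  have hU₁c1 : ∀ X : Matrix (Fin n) (Fin n) ℂ, U₁ᴴ * (U₁ * X) = X := fun X => by
    rw [← Matrix.mul_assoc, hU₁1, Matrix.one_mul]
  have hU₁c2 : ∀ X : Matrix (Fin n) (Fin n) ℂ, U₁ * (U₁ᴴ * X) = X := fun X => by
    rw [← Matrix.mul_assoc, hU₁2, Matrix.one_mul]
  have hAf : A = U₁ * C * Vᴴ := by
    calc A = A * V * Vᴴ := by rw [Matrix.mul_assoc, hV2, Matrix.mul_one]
      _ = U₁ * C * Vᴴ := by rw [hU₁]
  -- step 2 : polar of Bᴴ * U₁ : B = U₁ S Q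
  have hBB : B * Bᴴ = 1 - A * Aᴴ := by rw [← f11]; abel
  have hAAh : A * Aᴴ = U₁ * (C * (C * U₁ᴴ)) := by
    rw [hAf]
    simp only [Matrix.conjTranspose_mul, Matrix.conjTranspose_conjTranspose, hCh,
      Matrix.mul_assoc, hVc1]
  obtain ⟨Q', hQ'mem, hQ'⟩ := polar_psd (Bᴴ * U₁) S hSpsd (by
    rw [Matrix.conjTranspose_mul, Matrix.conjTranspose_conjTranspose, hSS]
    calc U₁ᴴ * B * (Bᴴ * U₁) = U₁ᴴ * ((B * Bᴴ) * U₁) := by simp only [Matrix.mul_assoc]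
      _ = 1 - C * C := by
          rw [hBB, Matrix.sub_mul, Matrix.one_mul, hAAh, Matrix.mul_sub, hU₁1]
          rw [show U₁ * (C * (C * U₁ᴴ)) * U₁ = U₁ * (C * (C * (U₁ᴴ * U₁))) by
            simp only [Matrix.mul_assoc]]
          rw [hU₁1, Matrix.mul_one, hU₁c1])
  set Q : Matrix (Fin n) (Fin n) ℂ := Q'ᴴ with hQdef
  have hQmem : Q ∈ Matrix.unitaryGroup (Fin n) ℂ := by
    rw [hQdef, ← Matrix.star_eq_conjTranspose]; exact Unitary.star_mem hQ'mem
  have hQ1 : Qᴴ * Q = 1 := by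
    rw [← Matrix.star_eq_conjTranspose]; exact Matrix.mem_unitaryGroup_iff'.mp hQmem
  have hQ2 : Q * Qᴴ = 1 := by
    rw [← Matrix.star_eq_conjTranspose]; exact Matrix.mem_unitaryGroup_iff.mp hQmem
  have hBf : B = U₁ * (S * Q) := by
    have := congrArg Matrix.conjTranspose hQ'
    rw [Matrix.conjTranspose_mul, Matrix.conjTranspose_mul,
      Matrix.conjTranspose_conjTranspose, hSh] at this
    calc B = U₁ * (U₁ᴴ * B) := (hU₁c2 B).symm
      _ = U₁ * (S * Q) := by rw [← this]
  -- step 3 : polar of Cm * V : Cm = R S Vᴴ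
  obtain ⟨R, hRmem, hR⟩ := polar_psd (Cm * V) S hSpsd (by
    rw [Matrix.conjTranspose_mul]
    have hCmCm : Cmᴴ * Cm = 1 - Aᴴ * A := by rw [← e11]; abel
    calc Vᴴ * Cmᴴ * (Cm * V) = Vᴴ * ((Cmᴴ * Cm) * V) := by simp only [Matrix.mul_assoc]
      _ = 1 - Dg := by
          rw [hCmCm, Matrix.sub_mul, Matrix.one_mul, Matrix.mul_sub,
            ← Matrix.mul_assoc Vᴴ (Aᴴ * A) V, hVGV, hV1]
      _ = S * S := by
          rw [hSS, hCCd]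
  )
  have hR1 : Rᴴ * R = 1 := by
    rw [← Matrix.star_eq_conjTranspose]; exact Matrix.mem_unitaryGroup_iff'.mp hRmem
  have hR2 : R * Rᴴ = 1 := by
    rw [← Matrix.star_eq_conjTranspose]; exact Matrix.mem_unitaryGroup_iff.mp hRmem
  have hRc1 : ∀ X : Matrix (Fin n) (Fin n) ℂ, Rᴴ * (R * X) = X := fun X => by
    rw [← Matrix.mul_assoc, hR1, Matrix.one_mul]
  have hRc2 : ∀ X : Matrix (Fin n) (Fin n) ℂ, R * (Rᴴ * X) = X := fun X => by
    rw [← Matrix.mul_assoc, hR2, Matrix.one_mul]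
  have hCmf : Cm = R * S * Vᴴ := by
    calc Cm = Cm * V * Vᴴ := by rw [Matrix.mul_assoc, hV2, Matrix.mul_one]
      _ = R * S * Vᴴ := by rw [hR]
  -- auxiliary diagonal matrices
  set ee : Fin n → ℂ := fun i => if s i = 0 then 1 else 0 with hee
  set pp : Fin n → ℂ := fun i => if s i = 0 then 0 else (s i : ℂ)⁻¹ with hpp
  set E : Matrix (Fin n) (Fin n) ℂ := Matrix.diagonal ee with hEdef
  set Sp : Matrix (Fin n) (Fin n) ℂ := Matrix.diagonal pp with hSpdef
  have hSE : S * E = 0 := by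
    rw [hSdef, hEdef, ← Matrix.diagonal_zero]
    exact diag_eq _ _ _ (fun i => by by_cases h : s i = 0 <;> simp [hee, h])
  have hES : E * S = 0 := by
    rw [hSdef, hEdef, ← Matrix.diagonal_zero]
    exact diag_eq _ _ _ (fun i => by by_cases h : s i = 0 <;> simp [hee, h])
  have hSpS : Sp * S = 1 - E := by
    rw [hSdef, hEdef, hSpdef,
      show (1 : Matrix (Fin n) (Fin n) ℂ) = Matrix.diagonal (fun _ => 1) from
        Matrix.diagonal_one.symm, Matrix.diagonal_sub]
    refine diag_eq _ _ _ (fun i => ?_)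
    by_cases h : s i = 0
    · simp [hee, hpp, h]
    · simp [hee, hpp, h, inv_mul_cancel₀ (show (s i : ℂ) ≠ 0 by exact_mod_cast h)]
  have hSSp : S * Sp = 1 - E := by rw [← hSpS, hSdef, hSpdef, diag_comm]
  have hSD : S * (1 - E) = S := by rw [Matrix.mul_sub, Matrix.mul_one, hSE, sub_zero]
  have hCE : C * E = E := by
    rw [hCdef, hEdef]
    refine diag_eq _ _ _ (fun i => ?_)
    by_cases h : s i = 0 <;> simp [hee, h, hse1 i]
  have hEC : E * C = E := by rw [hCdef, hEdef, diag_comm, ← hEdef, ← hCdef, hCE]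
  have hEE : E * E = E := by
    rw [hEdef]
    refine diag_eq _ _ _ (fun i => ?_)
    by_cases h : s i = 0 <;> simp [hee, h]
  have hEh : Eᴴ = E := by
    rw [hEdef, Matrix.diagonal_conjTranspose]
    refine congrArg Matrix.diagonal (funext fun i => ?_)
    by_cases h : s i = 0 <;> simp [hee, h]
  have hCDg : C * (1 - E) = (1 - E) * C := by
    rw [Matrix.mul_sub, Matrix.sub_mul, Matrix.mul_one, Matrix.one_mul, hCE, hEC]
  -- key relations
  set Bm : Matrix (Fin n) (Fin n) ℂ := Rᴴ * Dm with hBm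
  have hK1 : S * (C * Q) + S * Bm = 0 := by
    have hK1a : C * (S * Q) + S * Bm = 0 := ?_
    · rw [← Matrix.mul_assoc, hCS, Matrix.mul_assoc] at hK1a
      exact hK1a
    have e12' : V * (C * (S * Q)) + V * (S * Bm) = 0 := by
      have hAh : Aᴴ = V * (C * U₁ᴴ) := by
        rw [hAf]
        simp only [Matrix.conjTranspose_mul, Matrix.conjTranspose_conjTranspose, hCh,
          Matrix.mul_assoc]
      have hCmh : Cmᴴ = V * (S * Rᴴ) := by
        rw [hCmf]
        simp only [Matrix.conjTranspose_mul, Matrix.conjTranspose_conjTranspose, hSh,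
          Matrix.mul_assoc]
      calc V * (C * (S * Q)) + V * (S * Bm)
          = Aᴴ * B + Cmᴴ * Dm := by
            rw [hAh, hCmh, hBf, hBm]
            simp only [Matrix.mul_assoc, hU₁c1]
        _ = 0 := e12
    have := congrArg (fun X => Vᴴ * X) e12'
    simpa only [Matrix.mul_add, hVc1, Matrix.mul_zero] using this
  have hK1' : (1 - E) * Bm = -((1 - E) * (C * Q)) := by
    have := congrArg (fun X => Sp * X) hK1
    simp only [Matrix.mul_add, Matrix.mul_zero, ← Matrix.mul_assoc, hSpS] at this
    linear_combination (norm := noncomm_ring) this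
  have hK2 : Bm * Bmᴴ = C * C := by
    have hCmCmh : Cm * Cmᴴ = R * (S * (S * Rᴴ)) := by
      rw [hCmf]
      simp only [Matrix.conjTranspose_mul, Matrix.conjTranspose_conjTranspose, hSh,
        Matrix.mul_assoc, hVc1]
    have hDmDm : Dm * Dmᴴ = 1 - R * (S * (S * Rᴴ)) := by rw [← hCmCmh, ← f22]; abel
    rw [hBm, Matrix.conjTranspose_mul, Matrix.conjTranspose_conjTranspose]
    calc Rᴴ * Dm * (Dmᴴ * R) = Rᴴ * ((Dm * Dmᴴ) * R) := by simp only [Matrix.mul_assoc]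
      _ = C * C := by
          rw [hDmDm, Matrix.sub_mul, Matrix.one_mul, Matrix.mul_sub, hR1]
          simp only [Matrix.mul_assoc, hRc1, hR1, Matrix.mul_one]
          rw [hSS, sub_sub_cancel]
  have hK3 : Bm * (Qᴴ * S) = -(S * C) := by
    have f12' : U₁ * (C * (S * Rᴴ)) + U₁ * (S * (Q * Dmᴴ)) = 0 := by
      calc U₁ * (C * (S * Rᴴ)) + U₁ * (S * (Q * Dmᴴ))
          = A * Cmᴴ + B * Dmᴴ := by
            rw [hAf, hCmf, hBf]
            simp only [Matrix.conjTranspose_mul, Matrix.conjTranspose_conjTranspose, hSh,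
              Matrix.mul_assoc, hVc1]
        _ = 0 := f12
    have h3 : C * (S * Rᴴ) + S * (Q * Dmᴴ) = 0 := by
      have := congrArg (fun X => U₁ᴴ * X) f12'
      simpa only [Matrix.mul_add, hU₁c1, Matrix.mul_zero] using this
    have h4 := congrArg Matrix.conjTranspose h3
    simp only [Matrix.conjTranspose_add, Matrix.conjTranspose_mul,
      Matrix.conjTranspose_conjTranspose, hSh, hCh, Matrix.conjTranspose_zero] at h4
    have h5 := congrArg (fun X => Rᴴ * X) h4
    simp only [Matrix.mul_add, Matrix.mul_zero, Matrix.mul_assoc, hRc1] at h5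
    rw [hBm]
    simp only [Matrix.mul_assoc]
    linear_combination (norm := noncomm_ring) h5
  -- define V₂, U₂
  set V₂ : Matrix (Fin n) (Fin n) ℂ := (1 - E) * Q - E * Bm with hV₂def
  have hSV₂ : S * V₂ = S * Q := by
    rw [hV₂def, Matrix.mul_sub, ← Matrix.mul_assoc, ← Matrix.mul_assoc, hSD, hSE,
      Matrix.zero_mul, sub_zero]
  have hCV₂ : C * V₂ = -Bm := by
    rw [hV₂def, Matrix.mul_sub, ← Matrix.mul_assoc C (1 - E) Q, hCDg,
      Matrix.mul_assoc (1 - E) C Q, ← Matrix.mul_assoc C E Bm, hCE,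
      show (1 - E) * (C * Q) = -((1 - E) * Bm) from by rw [hK1', neg_neg],
      Matrix.sub_mul, Matrix.one_mul]
    abel
  have hV₂mem : V₂ ∈ Matrix.unitaryGroup (Fin n) ℂ := by
    rw [Matrix.mem_unitaryGroup_iff, Matrix.star_eq_conjTranspose]
    have hV₂h : V₂ᴴ = Qᴴ * (1 - E) - Bmᴴ * E := by
      rw [hV₂def, Matrix.conjTranspose_sub, Matrix.conjTranspose_mul, Matrix.conjTranspose_mul,
        hEh, Matrix.conjTranspose_sub, Matrix.conjTranspose_one, hEh]
    rw [hV₂h, hV₂def]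
    have t3 : E * (Bm * (Qᴴ * (1 - E))) = 0 := by
      rw [← hSSp, show Bm * (Qᴴ * (S * Sp)) = (Bm * (Qᴴ * S)) * Sp by
        simp only [Matrix.mul_assoc], hK3]
      rw [show E * (-(S * C) * Sp) = -((E * S) * (C * Sp)) by simp only [Matrix.mul_assoc]; noncomm_ring,
        hES, Matrix.zero_mul, neg_zero]
    have t2 : ((1 - E) * Q) * (Bmᴴ * E) = 0 := by
      have := congrArg Matrix.conjTranspose t3
      simp only [Matrix.conjTranspose_mul, Matrix.conjTranspose_zero,
        Matrix.conjTranspose_conjTranspose, hEh, Matrix.conjTranspose_sub,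
        Matrix.conjTranspose_one] at this
      simpa only [Matrix.mul_assoc] using this
    have hDD : (1 - E) * (1 - E) = 1 - E := by
      rw [Matrix.mul_sub, Matrix.mul_one, Matrix.sub_mul, Matrix.one_mul, hEE]
      abel
    have t1 : ((1 - E) * Q) * (Qᴴ * (1 - E)) = 1 - E := by
      rw [show ((1 - E) * Q) * (Qᴴ * (1 - E)) = (1 - E) * ((Q * Qᴴ) * (1 - E)) by
        simp only [Matrix.mul_assoc], hQ2, Matrix.one_mul, hDD]
    have t4 : (E * Bm) * (Bmᴴ * E) = E := by
      rw [show (E * Bm) * (Bmᴴ * E) = E * ((Bm * Bmᴴ) * E) by simp only [Matrix.mul_assoc],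
        hK2, Matrix.mul_assoc C C E, hCE, hCE, hEE]
    have t3' : (E * Bm) * (Qᴴ * (1 - E)) = 0 := by rw [Matrix.mul_assoc]; exact t3
    calc ((1 - E) * Q - E * Bm) * (Qᴴ * (1 - E) - Bmᴴ * E)
        = ((1 - E) * Q) * (Qᴴ * (1 - E)) - ((1 - E) * Q) * (Bmᴴ * E)
            - ((E * Bm) * (Qᴴ * (1 - E))) + (E * Bm) * (Bmᴴ * E) := by noncomm_ring
      _ = 1 := by rw [t1, t2, t3', t4]; abel
  set U₂ : Matrix (Fin n) (Fin n) ℂ := -R with hU₂def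
  have hU₂mem : U₂ ∈ Matrix.unitaryGroup (Fin n) ℂ := by
    rw [Matrix.mem_unitaryGroup_iff', hU₂def, star_neg, neg_mul_neg,
      Matrix.star_eq_conjTranspose, hR1]
  have hV₁mem : Vᴴ ∈ Matrix.unitaryGroup (Fin n) ℂ := by
    rw [← Matrix.star_eq_conjTranspose]; exact Unitary.star_mem hVmem
  -- final assembly
  refine ⟨U₁, U₂, Vᴴ, V₂, C, S, hU₁mem, hU₂mem, hV₁mem, hV₂mem, hCpsd,
    Matrix.isDiag_diagonal _, hSpsd, Matrix.isDiag_diagonal _, ?_, ?_⟩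
  · rw [pow_two, pow_two]; exact hCS1
  · rw [hWb, Matrix.fromBlocks_multiply, Matrix.fromBlocks_multiply]
    simp only [Matrix.zero_mul, Matrix.mul_zero, add_zero, zero_add, Matrix.fromBlocks_inj]
    refine ⟨?_, ?_, ?_, ?_⟩
    · rw [hAf]
    · rw [hBf, Matrix.mul_assoc, hSV₂]
    · rw [hCmf, hU₂def]
      rw [Matrix.neg_mul, Matrix.mul_neg, neg_neg]
    · rw [hU₂def]
      have : -R * C * V₂ = Dm := by
        rw [Matrix.mul_assoc, hCV₂, hBm, Matrix.neg_mul, Matrix.mul_neg, neg_neg,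
          ← Matrix.mul_assoc, hR2, Matrix.one_mul]
      exact this.symm
end
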